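/- Define f_0, f_1 : ℝ → ℝ by f_0(x) = |3x − 1| and f_1(x) = |3x − 2|, and for n ≥ 1 let E_n : ℝ → ℝ be the lower envelope E_n(x) = min_{σ ∈ {0,1}^n} f_σ(x) over all 2^n compositions. Then E_n is piecewise linear with at least 2^n pieces, i.e., p(E_n) ≥ 2^n. -/

import Mathlib

/-- `f : ℝ → ℝ` is piecewise linear with at most `k` pieces: there are
breakpoints `c 0 ≤ c 1 ≤ … ≤ c (k-2)` such that on each of the `k` intervals
`(-∞, c 0], [c 0, c 1], …, [c (k-2), ∞)` the function `f` agrees with some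
affine function `x ↦ a * x + b`. -/
def PiecewiseAffineWith (f : ℝ → ℝ) (k : ℕ) : Prop :=
  0 < k ∧ ∃ c : Fin (k - 1) → ℝ, Monotone c ∧
    ∀ j : Fin k, ∃ a b : ℝ, ∀ y : ℝ,
      (∀ i : Fin (k - 1), (i : ℕ) < (j : ℕ) → c i ≤ y) →
      (∀ i : Fin (k - 1), (j : ℕ) ≤ (i : ℕ) → y ≤ c i) →
      f y = a * y + b

/-- `p(f)`: the least `k` such that `f` is piecewise linear with at most `k` pieces. -/
noncomputable def nPieces (f : ℝ → ℝ) : ℕ := sInf {k | PiecewiseAffineWith f k}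

/-- The tent-like piecewise linear function `f₀ x = |3x - 1|`. -/
noncomputable def f₀ (x : ℝ) : ℝ := |3 * x - 1|

/-- The tent-like piecewise linear function `f₁ x = |3x - 2|`. -/
noncomputable def f₁ (x : ℝ) : ℝ := |3 * x - 2|

/-- For a bit string `σ = σ₁ ⋯ σₙ` (as a list of booleans, `false ↦ f₀`,
`true ↦ f₁`), the composition `f_σ = f_{σₙ} ∘ ⋯ ∘ f_{σ₁}`: the innermost
function corresponds to the first bit. -/
noncomputable def bitComp (f0 f1 : ℝ → ℝ) (l : List Bool) : ℝ → ℝ :=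
  fun x => l.foldl (fun y b => (if b then f1 else f0) y) x

/-- The lower envelope `E_n x = min_{σ ∈ {0,1}ⁿ} f_σ x` of all `2ⁿ`
compositions of `f₀`, `f₁`. -/
noncomputable def lowerEnvelope (n : ℕ) : ℝ → ℝ :=
  fun x => Finset.univ.inf' (Finset.univ_nonempty (α := Fin n → Bool))
    (fun σ : Fin n → Bool => bitComp f₀ f₁ (List.ofFn σ) x)

/-- the lower envelope `E_n` of the `2ⁿ` compositions of
`f₀ x = |3x - 1|` and `f₁ x = |3x - 2|` is piecewise linear with at least
`2ⁿ` pieces, i.e. `p(E_n) ≥ 2 ^ n`. -/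
lemma bitComp_append (l : List Bool) (b : Bool) (x : ℝ) :
    bitComp f₀ f₁ (l ++ [b]) x = (if b then f₁ else f₀) (bitComp f₀ f₁ l x) := by
  simp [bitComp, List.foldl_append]

lemma bitComp_cons (l : List Bool) (b : Bool) (x : ℝ) :
    bitComp f₀ f₁ (b :: l) x = bitComp f₀ f₁ l ((if b then f₁ else f₀) x) := by
  simp [bitComp]

lemma bitComp_nonneg (l : List Bool) (hl : l ≠ []) (x : ℝ) : 0 ≤ bitComp f₀ f₁ l x := by
  rcases List.eq_nil_or_concat l with h | ⟨l', b, rfl⟩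
  · exact absurd h hl
  · rw [List.concat_eq_append] at *
    rw [bitComp_append]; cases b <;> simp [f₀, f₁, abs_nonneg]

/-- pointwise ±(3^n x - m) form -/
lemma bitComp_form (l : List Bool) (x : ℝ) :
    ∃ ε : ℝ, (ε = 1 ∨ ε = -1) ∧ ∃ m : ℤ,
      bitComp f₀ f₁ l x = ε * (3 ^ l.length * x - m) := by
  induction l using List.reverseRecOn with
  | nil => exact ⟨1, Or.inl rfl, 0, by simp [bitComp]⟩
  | append_singleton l b ih =>
    obtain ⟨ε, hε, m, hm⟩ := ih
    have hc : ∃ c : ℤ, (if b then f₁ else f₀) (bitComp f₀ f₁ l x)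
        = |3 * bitComp f₀ f₁ l x - c| ∧ (c = 1 ∨ c = 2) := by
      cases b
      · exact ⟨1, by simp [f₀], Or.inl rfl⟩
      · exact ⟨2, by simp [f₁], Or.inr rfl⟩
    obtain ⟨c, hcval, hc12⟩ := hc
    rw [bitComp_append, hcval, hm]
    have hlen : (3:ℝ) ^ (l ++ [b]).length = 3 ^ l.length * 3 := by
      simp [pow_succ]
    rcases hε with rfl | rfl
    · refine ?_
      have : |3 * (1 * (3 ^ l.length * x - (m:ℝ))) - c| = |3 ^ (l ++ [b]).length * x - ((3*m + c : ℤ):ℝ)| := by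
        push_cast; rw [hlen]; ring_nf
      rw [this]
      rcases abs_cases ((3:ℝ) ^ (l ++ [b]).length * x - ((3*m + c : ℤ):ℝ)) with ⟨h1, _⟩ | ⟨h1, _⟩
      · exact ⟨1, Or.inl rfl, 3*m + c, by rw [h1]; ring⟩
      · exact ⟨-1, Or.inr rfl, 3*m + c, by rw [h1]; ring⟩
    · have : |3 * (-1 * (3 ^ l.length * x - (m:ℝ))) - c| = |3 ^ (l ++ [b]).length * x - ((3*m - c : ℤ):ℝ)| := by
        push_cast; rw [hlen, ← abs_neg]; ring_nf
      rw [this]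
      rcases abs_cases ((3:ℝ) ^ (l ++ [b]).length * x - ((3*m - c : ℤ):ℝ)) with ⟨h1, _⟩ | ⟨h1, _⟩
      · exact ⟨1, Or.inl rfl, 3*m - c, by rw [h1]; ring⟩
      · exact ⟨-1, Or.inr rfl, 3*m - c, by rw [h1]; ring⟩

/-- On each cell [t/3^n, (t+1)/3^n], every composition agrees with ε(3^n y - m). -/
lemma bitComp_affine_on_cell (l : List Bool) (t : ℤ) :
    ∃ ε : ℝ, (ε = 1 ∨ ε = -1) ∧ ∃ m : ℤ, ∀ y : ℝ,
      (t : ℝ) / 3 ^ l.length ≤ y → y ≤ ((t : ℝ) + 1) / 3 ^ l.length →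
      bitComp f₀ f₁ l y = ε * (3 ^ l.length * y - m) := by
  induction l using List.reverseRecOn generalizing t with
  | nil => exact ⟨1, Or.inl rfl, 0, fun y _ _ => by simp [bitComp]⟩
  | append_singleton l b ih =>
    obtain ⟨ε, hε, m, hm⟩ := ih (t / 3)
    set k := l.length with hk
    have h3 : (0:ℝ) < 3 ^ k := by positivity
    have hq1 : 3 * (t / 3) ≤ t := Int.lt_add_one_iff.mp (by
      have := Int.emod_lt_of_pos t (show (0:ℤ) < 3 by norm_num)
      have := Int.mul_ediv_add_emod t 3
      omega)
    have hq2 : t + 1 ≤ 3 * (t / 3) + 3 := by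
      have := Int.emod_nonneg t (show (3:ℤ) ≠ 0 by norm_num)
      have := Int.mul_ediv_add_emod t 3
      omega
    have hc : ∃ c : ℤ, (∀ z : ℝ, (if b then f₁ else f₀) z = |3 * z - c|) ∧ (c = 1 ∨ c = 2) := by
      cases b
      · exact ⟨1, fun z => by simp [f₀], Or.inl rfl⟩
      · exact ⟨2, fun z => by simp [f₁], Or.inr rfl⟩
    obtain ⟨c, hcval, hc12⟩ := hc
    have hlen : (3:ℝ) ^ (l ++ [b]).length = 3 ^ k * 3 := by simp [pow_succ, hk]
    -- new integer m₁ : value = |3^{k+1} y - m₁| on the small cell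
    have hcell1 : ∀ y : ℝ, (t : ℝ) / 3 ^ (l ++ [b]).length ≤ y → ((t / 3 : ℤ) : ℝ) / 3 ^ k ≤ y := by
      intro y h1
      refine le_trans ?_ h1
      rw [div_le_div_iff₀ h3 (by rw [hlen]; positivity)]
      rw [hlen]
      have : ((3 * (t/3) : ℤ) : ℝ) ≤ (t : ℝ) := by exact_mod_cast hq1
      push_cast at this ⊢; nlinarith
    have hcell2 : ∀ y : ℝ, y ≤ ((t : ℝ) + 1) / 3 ^ (l ++ [b]).length → y ≤ (((t / 3 : ℤ) : ℝ) + 1) / 3 ^ k := by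
      intro y h2
      refine le_trans h2 ?_
      rw [div_le_div_iff₀ (by rw [hlen]; positivity) h3]
      rw [hlen]
      have : ((t + 1 : ℤ) : ℝ) ≤ ((3 * (t/3) + 3 : ℤ) : ℝ) := by exact_mod_cast hq2
      push_cast at this ⊢; nlinarith
    have key : ∃ m₁ : ℤ, ∀ y : ℝ,
        (t : ℝ) / 3 ^ (l ++ [b]).length ≤ y → y ≤ ((t : ℝ) + 1) / 3 ^ (l ++ [b]).length →
        bitComp f₀ f₁ (l ++ [b]) y = |3 ^ (l ++ [b]).length * y - (m₁ : ℝ)| := by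
      rcases hε with rfl | rfl
      · refine ⟨3*m + c, fun y h1 h2 => ?_⟩
        rw [bitComp_append, hcval, hm y (hcell1 y h1) (hcell2 y h2)]
        rw [show |3 * (1 * (3 ^ k * y - (m:ℝ))) - c| = |3 ^ (l ++ [b]).length * y - ((3*m + c : ℤ):ℝ)| by
          push_cast; rw [hlen]; ring_nf]
      · refine ⟨3*m - c, fun y h1 h2 => ?_⟩
        rw [bitComp_append, hcval, hm y (hcell1 y h1) (hcell2 y h2)]
        rw [show |3 * (-1 * (3 ^ k * y - (m:ℝ))) - c| = |3 ^ (l ++ [b]).length * y - ((3*m - c : ℤ):ℝ)| by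
          push_cast; rw [hlen, ← abs_neg]; ring_nf]
    obtain ⟨m₁, hm₁⟩ := key
    have hpow : (0:ℝ) < 3 ^ (l ++ [b]).length := by positivity
    rcases le_or_gt m₁ t with hle | hlt
    · refine ⟨1, Or.inl rfl, m₁, fun y h1 h2 => ?_⟩
      rw [hm₁ y h1 h2, abs_of_nonneg, one_mul]
      have : (m₁ : ℝ) ≤ 3 ^ (l ++ [b]).length * y := by
        have ht : (t:ℝ) ≤ 3 ^ (l ++ [b]).length * y := by
          rw [div_le_iff₀ hpow] at h1; linarith
        have : (m₁ : ℝ) ≤ (t : ℝ) := by exact_mod_cast hle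
        linarith
      linarith
    · refine ⟨-1, Or.inr rfl, m₁, fun y h1 h2 => ?_⟩
      rw [hm₁ y h1 h2, abs_of_nonpos]
      · ring
      have ht : 3 ^ (l ++ [b]).length * y ≤ (t:ℝ) + 1 := by
        rw [le_div_iff₀ hpow] at h2; linarith
      have : (t : ℝ) + 1 ≤ (m₁ : ℝ) := by exact_mod_cast hlt
      linarith

lemma envelope_affine_on_halfcell (n : ℕ) (t : ℤ) :
    ∃ a b : ℝ, ∀ y : ℝ, (t : ℝ) / (2 * 3 ^ n) ≤ y → y ≤ ((t : ℝ) + 1) / (2 * 3 ^ n) →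
      lowerEnvelope n y = a * y + b := by
  set q : ℤ := t / 2 with hq
  have hq1 : 2 * q ≤ t := by
    have := Int.emod_nonneg t (show (2:ℤ) ≠ 0 by norm_num)
    have := Int.mul_ediv_add_emod t 2
    omega
  have hq2 : t + 1 ≤ 2 * q + 2 := by
    have := Int.emod_lt_of_pos t (show (0:ℤ) < 2 by norm_num)
    have := Int.mul_ediv_add_emod t 2
    omega
  have P3 : (0:ℝ) < 3 ^ n := by positivity
  have PD : (0:ℝ) < 2 * 3 ^ n := by positivity
  have H : ∀ σ : Fin n → Bool, ∃ ε : ℝ, (ε = 1 ∨ ε = -1) ∧ ∃ m : ℤ, ∀ y : ℝ,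
      (q : ℝ) / 3 ^ n ≤ y → y ≤ ((q : ℝ) + 1) / 3 ^ n →
      bitComp f₀ f₁ (List.ofFn σ) y = ε * (3 ^ n * y - m) := by
    intro σ
    have := bitComp_affine_on_cell (List.ofFn σ) q
    simpa [List.length_ofFn] using this
  choose ε hε m hm using H
  -- half-cell endpoints and midpoint
  set u : ℝ := (t : ℝ) / (2 * 3 ^ n) with hu
  set v : ℝ := ((t : ℝ) + 1) / (2 * 3 ^ n) with hv
  set w : ℝ := ((t : ℝ) + 1/2) / (2 * 3 ^ n) with hw
  have huv : u < v := by rw [hu, hv, div_lt_div_iff₀ PD PD]; nlinarith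
  have huw : u < w := by
    rw [hu, hw, div_lt_div_iff₀ PD PD]; nlinarith
  have hwv : w < v := by
    rw [hw, hv, div_lt_div_iff₀ PD PD]; nlinarith
  -- half-cell inside cell q
  have hsub : ∀ y : ℝ, u ≤ y → y ≤ v → (q : ℝ) / 3 ^ n ≤ y ∧ y ≤ ((q : ℝ) + 1) / 3 ^ n := by
    intro y h1 h2
    have c1 : ((2 * q : ℤ) : ℝ) ≤ (t : ℝ) := by exact_mod_cast hq1
    have c2 : ((t : ℝ) + 1) ≤ ((2 * q + 2 : ℤ) : ℝ) := by exact_mod_cast hq2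
    push_cast at c1 c2
    constructor
    · refine le_trans ?_ h1
      rw [div_le_div_iff₀ P3 PD]; nlinarith
    · refine le_trans h2 ?_
      rw [div_le_div_iff₀ PD P3]; nlinarith
  set ℓ : (Fin n → Bool) → ℝ → ℝ := fun σ y => ε σ * (3 ^ n * y - m σ) with hℓ
  obtain ⟨σs, -, hσs⟩ := Finset.exists_min_image Finset.univ (fun σ => ℓ σ w)
    (Finset.univ_nonempty)
  have hσs' : ∀ σ, ℓ σs w ≤ ℓ σ w := fun σ => hσs σ (Finset.mem_univ σ)
  -- integer gap: no integer strictly between t and t+1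
  have gap : ∀ M : ℤ, (t : ℝ) < (M : ℝ) → (M : ℝ) < (t : ℝ) + 1 → False := by
    intro M h1 h2
    have g1 : t < M := by exact_mod_cast h1
    have g2 : (M : ℝ) < ((t + 1 : ℤ) : ℝ) := by push_cast; linarith
    have g2' : M < t + 1 := by exact_mod_cast g2
    omega
  have huval : 2 * 3^n * u = (t : ℝ) := by first | (rw [hu]; field_simp; ring) | (rw [hu]; field_simp)
  have hvval : 2 * 3^n * v = (t : ℝ) + 1 := by first | (rw [hv]; field_simp; ring) | (rw [hv]; field_simp)
  have hwval : 2 * 3^n * w = (t : ℝ) + 1/2 := by first | (rw [hw]; field_simp; ring) | (rw [hw]; field_simp)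
  -- minimizer at midpoint also minimizes at both endpoints
  have hend : ∀ e : ℝ, (e = u ∨ e = v) → ∀ σ, ℓ σs e ≤ ℓ σ e := by
    intro e he σ
    have hee : (t : ℝ) ≤ 2 * 3^n * e ∧ 2 * 3^n * e ≤ (t : ℝ) + 1 := by
      rcases he with rfl | rfl
      · constructor <;> linarith [huval]
      · constructor <;> linarith [hvval]
    by_contra hcon
    push_neg at hcon
    have hww := hσs' σ
    rcases hε σ with hεσ | hεσ <;> rcases hε σs with hεσs | hεσs
    · simp only [hℓ] at hcon hww; rw [hεσ, hεσs] at hcon hww; linarith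
    · -- σ has +, σs has −  : crossing point M = mσ + mσs with t < M < t+1
      simp only [hℓ] at hcon hww; rw [hεσ, hεσs] at hcon hww
      have de : 2 * 3^n * e < ((m σ : ℝ) + m σs) := by linarith
      have dw : ((m σ : ℝ) + m σs) ≤ 2 * 3^n * w := by linarith
      exact gap (m σ + m σs) (by push_cast; linarith [hee.1])
        (by push_cast; rw [hwval] at dw; linarith)
    · -- σ has −, σs has +
      simp only [hℓ] at hcon hww; rw [hεσ, hεσs] at hcon hww
      have de : ((m σ : ℝ) + m σs) < 2 * 3^n * e := by linarith
      have dw : 2 * 3^n * w ≤ ((m σ : ℝ) + m σs) := by linarith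
      exact gap (m σ + m σs) (by push_cast; rw [hwval] at dw; linarith)
        (by push_cast; linarith [hee.2])
    · simp only [hℓ] at hcon hww; rw [hεσ, hεσs] at hcon hww; linarith
  -- minimizer on the whole half-cell
  have hptw : ∀ y : ℝ, u ≤ y → y ≤ v → ∀ σ, ℓ σs y ≤ ℓ σ y := by
    intro y h1 h2 σ
    have hdu := hend u (Or.inl rfl) σ
    have hdv := hend v (Or.inr rfl) σ
    rw [hℓ] at hdu hdv ⊢
    simp only at hdu hdv ⊢
    nlinarith [mul_nonneg (sub_nonneg.mpr h1) (sub_nonneg.mpr h2), huv]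
  refine ⟨ε σs * 3 ^ n, -(ε σs * m σs), fun y h1 h2 => ?_⟩
  have hval : ∀ σ, bitComp f₀ f₁ (List.ofFn σ) y = ℓ σ y := fun σ =>
    hm σ y (hsub y h1 h2).1 (hsub y h1 h2).2
  have : lowerEnvelope n y = ℓ σs y := by
    rw [lowerEnvelope]
    apply le_antisymm
    · exact le_trans (Finset.inf'_le _ (Finset.mem_univ σs)) (le_of_eq (hval σs))
    · exact Finset.le_inf' _ _ (fun σ _ => by rw [hval σ]; exact hptw y h1 h2 σ)
  rw [this, hℓ]; ring

lemma bitComp_ge_one (l : List Bool) :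
    ∃ m : ℝ, m ≤ 3 ^ l.length - 1 ∧ ∀ z : ℝ, 1 ≤ z →
      bitComp f₀ f₁ l z = 3 ^ l.length * z - m := by
  induction l with
  | nil => exact ⟨0, by norm_num, fun z hz => by simp [bitComp]⟩
  | cons b l ih =>
    obtain ⟨m, hm, hval⟩ := ih
    have hc : ∃ c : ℝ, (∀ z : ℝ, (if b then f₁ else f₀) z = |3 * z - c|) ∧ 1 ≤ c ∧ c ≤ 2 := by
      cases b
      · exact ⟨1, fun z => by simp [f₀], by norm_num, by norm_num⟩
      · exact ⟨2, fun z => by simp [f₁], by norm_num, by norm_num⟩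
    obtain ⟨c, hcval, hc1, hc2⟩ := hc
    refine ⟨3 ^ l.length * c + m, ?_, fun z hz => ?_⟩
    · have : (1:ℝ) ≤ 3 ^ l.length := one_le_pow₀ (by norm_num : (1:ℝ) ≤ 3)
      simp only [List.length_cons, pow_succ]
      nlinarith
    · rw [bitComp_cons, hcval]
      have h1 : 1 ≤ 3 * z - c := by linarith
      have : |3 * z - c| = 3 * z - c := abs_of_nonneg (by linarith)
      rw [this, hval _ h1]
      simp only [List.length_cons, pow_succ]
      ring

lemma bitComp_nonpos (l : List Bool) (hl : l ≠ []) :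
    ∃ B : ℝ, ∀ y : ℝ, y ≤ 0 → bitComp f₀ f₁ l y = B - 3 ^ l.length * y := by
  rcases l with _ | ⟨b, l⟩
  · exact absurd rfl hl
  obtain ⟨m, hm, hval⟩ := bitComp_ge_one l
  have hc : ∃ c : ℝ, (∀ z : ℝ, (if b then f₁ else f₀) z = |3 * z - c|) ∧ 1 ≤ c ∧ c ≤ 2 := by
    cases b
    · exact ⟨1, fun z => by simp [f₀], by norm_num, by norm_num⟩
    · exact ⟨2, fun z => by simp [f₁], by norm_num, by norm_num⟩
  obtain ⟨c, hcval, hc1, hc2⟩ := hc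
  refine ⟨3 ^ l.length * c - m, fun y hy => ?_⟩
  rw [bitComp_cons, hcval]
  have habs : |3 * y - c| = c - 3 * y := by rw [abs_of_nonpos (by linarith)]; ring
  rw [habs, hval _ (by linarith)]
  simp only [List.length_cons, pow_succ]
  ring

lemma envelope_neg (n : ℕ) (hn : 1 ≤ n) :
    ∃ a b : ℝ, ∀ y : ℝ, y ≤ 0 → lowerEnvelope n y = a * y + b := by
  have H : ∀ σ : Fin n → Bool, ∃ B : ℝ, ∀ y : ℝ, y ≤ 0 →
      bitComp f₀ f₁ (List.ofFn σ) y = B - 3 ^ n * y := by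
    intro σ
    have hne : List.ofFn σ ≠ [] := by
      simp [← List.length_pos_iff, List.length_ofFn]; omega
    obtain ⟨B, hB⟩ := bitComp_nonpos (List.ofFn σ) hne
    exact ⟨B, fun y hy => by simpa [List.length_ofFn] using hB y hy⟩
  choose B hB using H
  obtain ⟨σs, -, hσs⟩ := Finset.exists_min_image Finset.univ B Finset.univ_nonempty
  refine ⟨-(3 ^ n), B σs, fun y hy => ?_⟩
  have : lowerEnvelope n y = B σs - 3 ^ n * y := by
    rw [lowerEnvelope]
    apply le_antisymm
    · exact le_trans (Finset.inf'_le _ (Finset.mem_univ σs)) (le_of_eq (hB σs y hy))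
    · exact Finset.le_inf' _ _ (fun σ _ => by
        rw [hB σ y hy]; have := hσs σ (Finset.mem_univ σ); linarith)
  rw [this]; ring

lemma envelope_pos (n : ℕ) :
    ∃ a b : ℝ, ∀ y : ℝ, 1 ≤ y → lowerEnvelope n y = a * y + b := by
  have H : ∀ σ : Fin n → Bool, ∃ m : ℝ, ∀ y : ℝ, 1 ≤ y →
      bitComp f₀ f₁ (List.ofFn σ) y = 3 ^ n * y - m := by
    intro σ
    obtain ⟨m, -, hm⟩ := bitComp_ge_one (List.ofFn σ)
    exact ⟨m, fun y hy => by simpa [List.length_ofFn] using hm y hy⟩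
  choose m hm using H
  obtain ⟨σs, -, hσs⟩ := Finset.exists_max_image Finset.univ m Finset.univ_nonempty
  refine ⟨3 ^ n, -(m σs), fun y hy => ?_⟩
  have : lowerEnvelope n y = 3 ^ n * y - m σs := by
    rw [lowerEnvelope]
    apply le_antisymm
    · exact le_trans (Finset.inf'_le _ (Finset.mem_univ σs)) (le_of_eq (hm σs y hy))
    · exact Finset.le_inf' _ _ (fun σ _ => by
        rw [hm σ y hy]; have := hσs σ (Finset.mem_univ σ); linarith)
  rw [this]; ring

lemma envelope_piecewise (n : ℕ) (hn : 1 ≤ n) :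
    PiecewiseAffineWith (lowerEnvelope n) (2 * 3 ^ n + 2) := by
  have hk1 : 2 * 3 ^ n + 2 - 1 = 2 * 3 ^ n + 1 := by omega
  have PD : (0:ℝ) < 2 * 3 ^ n := by positivity
  refine ⟨by omega, ?_⟩
  refine ⟨fun i => ((i : ℕ) : ℝ) / (2 * 3 ^ n), ?_, ?_⟩
  · intro i j hij
    have hcast : ((i : ℕ) : ℝ) ≤ ((j : ℕ) : ℝ) := by exact_mod_cast hij
    rw [div_le_div_iff₀ (by positivity) (by positivity)]
    nlinarith [hcast]
  · intro j
    rcases Nat.eq_zero_or_pos (j : ℕ) with hj0 | hjpos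
    · -- leftmost piece (-∞, 0]
      obtain ⟨a, b, hab⟩ := envelope_neg n hn
      refine ⟨a, b, fun y _ h2 => ?_⟩
      have := h2 ⟨0, by omega⟩ (by omega)
      simp only [Fin.val_mk, Nat.cast_zero, zero_div] at this
      exact hab y this
    rcases lt_or_ge (j : ℕ) (2 * 3 ^ n + 1) with hjlt | hjge
    · -- middle pieces
      obtain ⟨a, b, hab⟩ := envelope_affine_on_halfcell n ((j : ℕ) - 1 : ℕ)
      refine ⟨a, b, fun y h1 h2 => ?_⟩
      have hl := h1 ⟨(j : ℕ) - 1, by omega⟩ (by simp only [Fin.val_mk]; omega)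
      have hr := h2 ⟨(j : ℕ), by omega⟩ (by simp)
      simp only [Fin.val_mk] at hl hr
      have hcast : ((((j : ℕ) - 1 : ℕ) : ℤ) : ℝ) = (((j : ℕ) - 1 : ℕ) : ℝ) := by push_cast; ring
      have hcast2 : ((((j : ℕ) - 1 : ℕ) : ℤ) : ℝ) + 1 = (((j : ℕ)) : ℝ) := by
        push_cast [Nat.cast_sub hjpos]; ring
      exact hab y (by rw [hcast]; exact hl) (by rw [hcast2]; exact hr)
    · -- rightmost piece [1, ∞)
      obtain ⟨a, b, hab⟩ := envelope_pos n
      refine ⟨a, b, fun y h1 _ => ?_⟩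
      have hj : (j : ℕ) = 2 * 3 ^ n + 1 := by omega
      have := h1 ⟨2 * 3 ^ n, by omega⟩ (by first | (simp [hj]; omega) | simp [hj])
      simp only [Fin.val_mk] at this
      have hone : ((2 * 3 ^ n : ℕ) : ℝ) / (2 * 3 ^ n) = 1 := by
        rw [div_eq_one_iff_eq (by positivity)]; push_cast; ring
      rw [hone] at this
      exact hab y this

lemma envelope_nonneg (n : ℕ) (hn : 1 ≤ n) (y : ℝ) : 0 ≤ lowerEnvelope n y := by
  rw [lowerEnvelope]
  refine Finset.le_inf' _ _ (fun σ _ => ?_)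
  refine bitComp_nonneg _ ?_ _
  simp [← List.length_pos_iff, List.length_ofFn]; omega

lemma envelope_zero_int (n : ℕ) (y : ℝ) (h : lowerEnvelope n y = 0) :
    ∃ M : ℤ, 3 ^ n * y = (M : ℝ) := by
  obtain ⟨σ, -, hσ⟩ := Finset.exists_mem_eq_inf' (Finset.univ_nonempty (α := Fin n → Bool))
    (fun σ : Fin n → Bool => bitComp f₀ f₁ (List.ofFn σ) y)
  rw [lowerEnvelope] at h
  rw [h] at hσ
  obtain ⟨ε, hε, M, hM⟩ := bitComp_form (List.ofFn σ) y
  rw [List.length_ofFn] at hM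
  rw [← hσ] at hM
  refine ⟨M, ?_⟩
  rcases hε with rfl | rfl <;> linarith [hM.symm]

lemma exists_comp_zero : ∀ k : ℕ, 1 ≤ k → ∀ j : ℕ, 0 < j → j < 3 ^ k → ¬ (3 ∣ j) →
    ∃ l : List Bool, l.length = k ∧ bitComp f₀ f₁ l ((j : ℝ) / 3 ^ k) = 0 := by
  intro k
  induction k with
  | zero => omega
  | succ k ih =>
    intro _ j hj0 hjlt hj3
    rcases Nat.eq_zero_or_pos k with rfl | hk
    · -- base: k+1 = 1, j ∈ {1, 2}
      interval_cases j
      · exact ⟨[false], rfl, by norm_num [bitComp, f₀]⟩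
      · exact ⟨[true], rfl, by norm_num [bitComp, f₁]⟩
    · -- step
      have h3k : (0:ℝ) < 3 ^ k := by positivity
      have hpow : (3:ℝ) ^ (k+1) = 3 ^ k * 3 := by rw [pow_succ]
      have hdvd : (3:ℕ) ∣ 3 ^ k := dvd_pow_self 3 (by omega)
      have key : ∀ j' : ℕ, 0 < j' → j' < 3 ^ k → ¬ (3 ∣ j') → ∀ b : Bool,
          (if b then f₁ else f₀) ((j : ℝ) / 3 ^ (k+1)) = (j' : ℝ) / 3 ^ k →
          ∃ l : List Bool, l.length = k + 1 ∧ bitComp f₀ f₁ l ((j : ℝ) / 3 ^ (k+1)) = 0 := by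
        intro j' h0 h1 h3 b hb
        obtain ⟨l, hlen, hval⟩ := ih hk j' h0 h1 h3
        exact ⟨b :: l, by simp [hlen], by rw [bitComp_cons, hb, hval]⟩
      have harith : ∀ c : ℕ, c * 3 ^ k ≤ j → 3 * ((j:ℝ) / 3 ^ (k+1)) - c = ((j - c * 3^k : ℕ) : ℝ) / 3 ^ k := by
        intro c hc
        rw [Nat.cast_sub hc]
        push_cast
        field_simp
        ring
      have harith' : ∀ c : ℕ, j ≤ c * 3 ^ k → c - 3 * ((j:ℝ) / 3 ^ (k+1)) = ((c * 3^k - j : ℕ) : ℝ) / 3 ^ k := by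
        intro c hc
        rw [Nat.cast_sub hc]
        push_cast
        field_simp
        ring
      rcases lt_trichotomy j (3 ^ k) with hlt | heq | hgt
      · -- use f₀, j' = 3^k - j
        refine key (3 ^ k - j) (by omega) (by omega) (fun hd => hj3 (by omega)) false ?_
        simp only [if_neg (by simp : ¬ (false = true))]
        simp only [f₀]
        rw [abs_of_nonpos, show -(3 * ((j:ℝ) / 3 ^ (k+1)) - 1) = 1 - 3 * ((j:ℝ)/3^(k+1)) by ring,
          show (1:ℝ) = ((1:ℕ):ℝ) by norm_num, harith' 1 (by omega)]
        · norm_num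
        · have hj' : (j : ℝ) ≤ 3 ^ k := by exact_mod_cast hlt.le
          have h2 : 3 * ((j:ℝ) / 3 ^ (k+1)) = (j:ℝ) / 3 ^ k := by
            rw [hpow]; first | (field_simp; ring) | field_simp
          rw [sub_nonpos, h2, div_le_one (by positivity)]
          linarith
      · exfalso; apply hj3; omega
      rcases lt_trichotomy j (2 * 3 ^ k) with hlt2 | heq2 | hgt2
      · -- use f₀, j' = j - 3^k
        refine key (j - 3 ^ k) (by omega) (by omega) (fun hd => hj3 (by omega)) false ?_
        simp only [if_neg (by simp : ¬ (false = true))]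
        simp only [f₀]
        rw [abs_of_nonneg, show (1:ℝ) = ((1:ℕ):ℝ) by norm_num, harith 1 (by omega)]
        · norm_num
        · have hj' : (3:ℝ) ^ k ≤ (j : ℝ) := by exact_mod_cast hgt.le
          have h2 : 3 * ((j:ℝ) / 3 ^ (k+1)) = (j:ℝ) / 3 ^ k := by
            rw [hpow]; first | (field_simp; ring) | field_simp
          rw [sub_nonneg, h2, le_div_iff₀ (by positivity)]
          linarith
      · exfalso; apply hj3; omega
      · -- use f₁, j' = j - 2 * 3^k
        refine key (j - 2 * 3 ^ k) (by omega) (by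
            have := hjlt
            rw [pow_succ] at this
            omega) (fun hd => hj3 (by omega)) true ?_
        simp only [if_pos rfl]
        simp only [f₁, if_true]
        have hj' : (2:ℝ) * 3 ^ k ≤ (j : ℝ) := by exact_mod_cast hgt2.le
        have h2 : 3 * ((j:ℝ) / 3 ^ (k+1)) = (j:ℝ) / 3 ^ k := by
          rw [hpow]; first | (field_simp; ring) | field_simp
        have hside : (0:ℝ) ≤ 3 * ((j:ℝ) / 3 ^ (k+1)) - 2 := by
          rw [sub_nonneg, h2, le_div_iff₀ (by positivity)]; linarith
        rw [abs_of_nonneg hside, show (2:ℝ) = ((2:ℕ):ℝ) by norm_num, harith 2 (by omega)]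

lemma envelope_zero_at (n : ℕ) (hn : 1 ≤ n) (j : ℕ) (h0 : 0 < j) (h1 : j < 3 ^ n)
    (h3 : ¬ 3 ∣ j) : lowerEnvelope n ((j : ℝ) / 3 ^ n) = 0 := by
  obtain ⟨l, hlen, hval⟩ := exists_comp_zero n hn j h0 h1 h3
  refine le_antisymm ?_ (envelope_nonneg n hn _)
  subst hlen
  rw [lowerEnvelope]
  have hofn : List.ofFn l.get = l := List.ofFn_get l
  calc Finset.univ.inf' _ (fun σ : Fin l.length → Bool =>
        bitComp f₀ f₁ (List.ofFn σ) ((j : ℝ) / 3 ^ l.length))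
      ≤ bitComp f₀ f₁ (List.ofFn l.get) ((j : ℝ) / 3 ^ l.length) :=
        Finset.inf'_le _ (Finset.mem_univ _)
    _ = 0 := by rw [hofn, hval]

lemma envelope_lb (n : ℕ) (hn : 1 ≤ n) (k : ℕ)
    (hk : PiecewiseAffineWith (lowerEnvelope n) k) : 3 ^ (n - 1) + 1 ≤ k := by
  obtain ⟨hkpos, c, hmono, hpieces⟩ := hk
  have P3 : (0:ℝ) < 3 ^ n := by positivity
  -- every zero of the envelope is a breakpoint
  have hbp : ∀ M : ℕ, 0 < M → M < 3 ^ n → ¬ (3 ∣ M) →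
      ∃ idx : Fin (k - 1), c idx = (M : ℝ) / 3 ^ n := by
    intro M hM0 hMlt hM3
    set z : ℝ := (M : ℝ) / 3 ^ n with hz
    by_contra hno
    push_neg at hno
    -- a positive radius below distance to all breakpoints and 1/3^n
    obtain ⟨δ, hδpos, hδ3, hδc⟩ : ∃ δ : ℝ, 0 < δ ∧ δ ≤ 1 / 3 ^ n ∧
        ∀ i : Fin (k - 1), δ ≤ |c i - z| := by
      by_cases hne : (Finset.univ : Finset (Fin (k - 1))).Nonempty
      · refine ⟨min (1 / 3 ^ n) (Finset.univ.inf' hne (fun i => |c i - z|)),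
          lt_min (by positivity) ?_, min_le_left _ _, fun i => le_trans (min_le_right _ _)
            (Finset.inf'_le _ (Finset.mem_univ i))⟩
        rw [Finset.lt_inf'_iff]
        intro i _
        exact abs_pos.mpr (sub_ne_zero.mpr (hno i))
      · exact ⟨1 / 3 ^ n, by positivity, le_refl _,
          fun i => absurd ⟨i, Finset.mem_univ i⟩ hne⟩
    set T : Finset (Fin (k - 1)) := Finset.univ.filter (fun i => c i < z) with hT
    have hj₀lt : T.card < k := by
      have h1 : T.card ≤ k - 1 := le_trans (Finset.card_filter_le _ _)
        (by rw [Finset.card_univ, Fintype.card_fin])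
      omega
    set j : Fin k := ⟨T.card, hj₀lt⟩ with hj
    have hlow : ∀ i : Fin (k - 1), (i : ℕ) < T.card → c i < z := by
      intro i hi
      by_contra hge
      push_neg at hge
      have hsub : T.card ≤ (i : ℕ) := by
        have hmaps : ∀ i' ∈ T, (i' : ℕ) ∈ Finset.range (i : ℕ) := by
          intro i' hi'
          simp only [Finset.mem_range]
          by_contra hge'
          push_neg at hge'
          have hcc : c i ≤ c i' := hmono (by rwa [Fin.le_def])
          rw [hT, Finset.mem_filter] at hi'
          linarith [hi'.2]
        have := Finset.card_le_card_of_injOn (fun i' : Fin (k-1) => (i' : ℕ))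
          hmaps (fun a _ b _ h => Fin.val_injective h)
        simpa using this
      omega
    have hhigh : ∀ i : Fin (k - 1), T.card ≤ (i : ℕ) → z < c i := by
      intro i hi
      rcases lt_trichotomy (c i) z with hlt | heq | hgt
      · exfalso
        have hsub : (i : ℕ) + 1 ≤ T.card := by
          have hik : (i : ℕ) < k - 1 := i.isLt
          have hmaps : ∀ t ∈ Finset.range ((i : ℕ) + 1),
              (⟨min t (i : ℕ), by omega⟩ : Fin (k-1)) ∈ T := by
            intro t ht
            simp only [Finset.mem_range] at ht
            refine Finset.mem_filter.mpr ⟨Finset.mem_univ _, lt_of_le_of_lt ?_ hlt⟩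
            refine hmono ?_
            rw [Fin.le_def]
            simp [min_le_right]
          have := Finset.card_le_card_of_injOn
            (fun t : ℕ => (⟨min t (i : ℕ), by omega⟩ : Fin (k-1)))
            hmaps (fun a ha b hb h => by
              simp only [Finset.coe_range, Set.mem_Iio] at ha hb
              have := congrArg Fin.val h
              simp only [Fin.val_mk] at this
              omega)
          simpa using this
        omega
      · exact absurd heq (hno i)
      · exact hgt
    obtain ⟨a, b, hab⟩ := hpieces j
    have haff : ∀ y : ℝ, |y - z| < δ → lowerEnvelope n y = a * y + b := by
      intro y hy
      rw [abs_lt] at hy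
      refine hab y (fun i hi => ?_) (fun i hi => ?_)
      · have h1 := hlow i hi
        have h2 := hδc i
        rw [abs_of_nonpos (by linarith)] at h2
        linarith
      · have h1 := hhigh i hi
        have h2 := hδc i
        rw [abs_of_nonneg (by linarith)] at h2
        linarith
    have hz0 : lowerEnvelope n z = 0 := envelope_zero_at n hn M hM0 hMlt hM3
    have haz : a * z + b = 0 := by
      rw [← haff z (by simpa using hδpos)]
      exact hz0
    have h3nz : 3 ^ n * z = (M : ℝ) := by rw [hz]; field_simp
    have hpos : ∀ y : ℝ, |y - z| < δ → y ≠ z → 0 < lowerEnvelope n y := by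
      intro y hy hne'
      rcases (envelope_nonneg n hn y).lt_or_eq with h | h
      · exact h
      exfalso
      obtain ⟨M', hM'⟩ := envelope_zero_int n y h.symm
      have habs : |(M' : ℝ) - (M : ℝ)| < 1 := by
        rw [← hM', ← h3nz, ← mul_sub, abs_mul, abs_of_pos P3]
        calc 3 ^ n * |y - z| < 3 ^ n * δ := by
              exact mul_lt_mul_of_pos_left hy P3
          _ ≤ 3 ^ n * (1 / 3 ^ n) := mul_le_mul_of_nonneg_left hδ3 (le_of_lt P3)
          _ = 1 := by field_simp
      rw [abs_lt] at habs
      have hcast1 : -(1:ℤ) < M' - (M : ℤ) := by exact_mod_cast (by push_cast; linarith : -(1:ℝ) < (M':ℝ) - ((M:ℤ):ℝ))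
      have hcast2 : M' - (M : ℤ) < 1 := by exact_mod_cast (by push_cast; linarith : ((M':ℝ) - ((M:ℤ):ℝ) < 1))
      have : M' = (M : ℤ) := by omega
      apply hne'
      have : 3 ^ n * y = 3 ^ n * z := by rw [hM', h3nz, this]; push_cast; ring
      have h3 : (3:ℝ) ^ n ≠ 0 := ne_of_gt P3
      field_simp at this
      exact this
    have hy1 := hpos (z + δ/2) (by rw [show z + δ/2 - z = δ/2 by ring, abs_of_pos (by linarith)]; linarith) (by intro h; nlinarith [congrArg (· - z) h])
    have hy2 := hpos (z - δ/2) (by rw [show z - δ/2 - z = -(δ/2) by ring, abs_neg, abs_of_pos (by linarith)]; linarith) (by intro h; nlinarith [congrArg (· - z) h])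
    rw [haff (z + δ/2) (by rw [show z + δ/2 - z = δ/2 by ring, abs_of_pos (by linarith)]; linarith)] at hy1
    rw [haff (z - δ/2) (by rw [show z - δ/2 - z = -(δ/2) by ring, abs_neg, abs_of_pos (by linarith)]; linarith)] at hy2
    nlinarith [hy1, hy2, haz]
  -- breakpoint index inhabitant
  have h1lt : 1 < 3 ^ n := by
    calc 1 < 3 ^ 1 := by norm_num
    _ ≤ 3 ^ n := Nat.pow_le_pow_right (by norm_num) hn
  obtain ⟨idx0, -⟩ := hbp 1 (by norm_num) h1lt (by omega)
  -- the injection i ↦ breakpoint at (3i+1)/3^n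
  have h3n : 3 ^ n = 3 * 3 ^ (n - 1) := by
    conv_lhs => rw [show n = (n - 1) + 1 by omega]
    rw [pow_succ]; ring
  have hMok : ∀ i : ℕ, i < 3 ^ (n - 1) →
      0 < 3 * i + 1 ∧ 3 * i + 1 < 3 ^ n ∧ ¬ (3 ∣ 3 * i + 1) := by
    intro i hi
    refine ⟨by omega, by omega, by omega⟩
  set φ : ℕ → Fin (k - 1) := fun i =>
    if h : i < 3 ^ (n - 1) then
      (hbp (3 * i + 1) (hMok i h).1 (hMok i h).2.1 (hMok i h).2.2).choose
    else idx0 with hφ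
  have hφval : ∀ i : ℕ, i < 3 ^ (n - 1) → c (φ i) = ((3 * i + 1 : ℕ) : ℝ) / 3 ^ n := by
    intro i hi
    rw [hφ]
    simp only [dif_pos hi]
    exact (hbp (3 * i + 1) (hMok i hi).1 (hMok i hi).2.1 (hMok i hi).2.2).choose_spec
  have hcard : (Finset.range (3 ^ (n - 1))).card ≤ (Finset.univ : Finset (Fin (k-1))).card := by
    refine Finset.card_le_card_of_injOn φ (fun i _ => Finset.mem_univ _) ?_
    intro a ha b hb hab
    simp only [Finset.coe_range, Set.mem_Iio] at ha hb
    have h1 := hφval a ha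
    have h2 := hφval b hb
    rw [hab, h2] at h1
    have hr : (b : ℝ) = (a : ℝ) := by field_simp at h1; have h1' : 3 * b + 1 = 3 * a + 1 := (by exact_mod_cast h1); exact_mod_cast (by omega : b = a)
    have : b = a := by exact_mod_cast hr
    omega
  rw [Finset.card_range, Finset.card_univ, Fintype.card_fin] at hcard
  omega

lemma two_pow_le_aux (n : ℕ) (hn : 1 ≤ n) : 2 ^ n ≤ 3 ^ (n - 1) + 1 := by
  induction n with
  | zero => omega
  | succ m ih =>
    rcases Nat.eq_zero_or_pos m with rfl | hm
    · norm_num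
    · have h1 := ih hm
      have hms : m - 1 + 1 = m := by omega
      have hm3 : 3 ^ m = 3 * 3 ^ (m - 1) := by
        conv_lhs => rw [← hms]
        rw [pow_succ]; ring
      have h2 : 2 ^ (m + 1) = 2 * 2 ^ m := by rw [pow_succ]; ring
      have hp : 1 ≤ 3 ^ (m - 1) := Nat.one_le_pow _ _ (by norm_num)
      simp only [Nat.add_sub_cancel]
      omega

theorem lowerEnvelope_pieces_ge (n : ℕ) (hn : 1 ≤ n) :
    (∃ k : ℕ, PiecewiseAffineWith (lowerEnvelope n) k) ∧
    2 ^ n ≤ nPieces (lowerEnvelope n) := by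
  constructor
  · exact ⟨2 * 3 ^ n + 2, envelope_piecewise n hn⟩
  · refine le_csInf ⟨2 * 3 ^ n + 2, envelope_piecewise n hn⟩ ?_
    intro k hk
    exact le_trans (two_pow_le_aux n hn) (envelope_lb n hn k hk)
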